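/- Let n be a natural number, let R be a commutative ℚ-algebra, let x ∈ R be a unit, and let s ∈ R satisfy s^{n+1} = 0. Define Δ = x · Σ_{k=0}^{n} c_k (s·x⁻²)^k ∈ R, where c_k ∈ ℚ is the generalized binomial coefficient (1/2 choose k). Then Δ^{2n+1} = Σ_{k=0}^{n} d_k x^{2n+1−2k} s^k, where d_k ∈ ℚ is the generalized binomial coefficient (n + 1/2 choose k); in particular Δ^{2n+1} is given by an expression involving only nonnegative powers of x. -/

import Mathlib

/-- The generalized binomial coefficient `(a choose k) = (∏_{i=0}^{k-1} (a − i))/k!` in `ℚ`. -/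
def ratChoose (a : ℚ) (k : ℕ) : ℚ :=
  (∏ i ∈ Finset.range k, (a - i)) / (Nat.factorial k)

open Polynomial Finset in
lemma smeval_descPochhammer_rat (a : ℚ) (k : ℕ) :
    (descPochhammer ℤ k).smeval a = ∏ i ∈ Finset.range k, (a - i) := by
  induction k with
  | zero => simp [descPochhammer_zero, Polynomial.smeval_one]
  | succ k ih =>
    rw [descPochhammer_succ_right, Polynomial.smeval_mul, ih, Finset.prod_range_succ]
    congr 1
    simp [Polynomial.smeval_sub, Polynomial.smeval_X, Polynomial.smeval_natCast]

lemma ratChoose_eq_choose (a : ℚ) (k : ℕ) : ratChoose a k = Ring.choose a k := by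
  have h := Ring.descPochhammer_eq_factorial_smul_choose (R := ℚ) a k
  rw [smeval_descPochhammer_rat] at h
  rw [ratChoose, h, nsmul_eq_mul]
  field_simp

lemma ratChoose_natCast (n k : ℕ) : ratChoose (n : ℚ) k = Nat.choose n k := by
  rw [ratChoose_eq_choose, Ring.choose_natCast]

lemma ratChoose_add (a b : ℚ) (m : ℕ) :
    ratChoose (a + b) m =
      ∑ ij ∈ Finset.HasAntidiagonal.antidiagonal m, ratChoose a ij.1 * ratChoose b ij.2 := by
  simp only [ratChoose_eq_choose]
  exact Ring.add_choose_eq m (Commute.all a b)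

open Polynomial in
noncomputable def halfPoly (n : ℕ) : Polynomial ℚ :=
  ∑ k ∈ Finset.range (n + 1), C (ratChoose (1 / 2) k) * X ^ k

open Polynomial in
lemma coeff_halfPoly (n m : ℕ) :
    (halfPoly n).coeff m = if m ≤ n then ratChoose (1 / 2) m else 0 := by
  rw [halfPoly, Polynomial.finset_sum_coeff]
  simp only [Polynomial.coeff_C_mul, Polynomial.coeff_X_pow]
  rw [Finset.sum_congr rfl (fun k _ => by rw [mul_ite, mul_one, mul_zero]),
    Finset.sum_ite_eq (Finset.range (n + 1)) m (fun k => ratChoose (1 / 2) k)]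
  simp [Nat.lt_succ_iff]

open Polynomial in
lemma halfPoly_sq (n : ℕ) : (X : Polynomial ℚ) ^ (n + 1) ∣ halfPoly n ^ 2 - (1 + X) := by
  rw [Polynomial.X_pow_dvd_iff]
  intro d hd
  have hd' : d ≤ n := Nat.lt_succ_iff.mp hd
  rw [Polynomial.coeff_sub, sq, Polynomial.coeff_mul]
  have hsum : ∑ ij ∈ Finset.HasAntidiagonal.antidiagonal d, (halfPoly n).coeff ij.1 * (halfPoly n).coeff ij.2
      = ratChoose 1 d := by
    have : (1 : ℚ) = 1 / 2 + 1 / 2 := by norm_num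
    rw [this, ratChoose_add]
    refine Finset.sum_congr rfl fun ij hij => ?_
    have h1 : ij.1 ≤ d := Finset.HasAntidiagonal.antidiagonal.fst_le hij
    have h2 : ij.2 ≤ d := Finset.HasAntidiagonal.antidiagonal.snd_le hij
    rw [coeff_halfPoly, coeff_halfPoly, if_pos (h1.trans hd'), if_pos (h2.trans hd')]
  rw [hsum]
  have : ratChoose 1 d = Nat.choose 1 d := by
    simpa using ratChoose_natCast 1 d
  rw [this, Polynomial.coeff_add, Polynomial.coeff_one, Polynomial.coeff_X]
  rcases d with _ | _ | d <;>
    simp [Polynomial.coeff_one, Polynomial.coeff_X, Nat.choose]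

open Polynomial in
noncomputable def targetPoly (n : ℕ) : Polynomial ℚ :=
  ∑ k ∈ Finset.range (n + 1), C (ratChoose ((n : ℚ) + 1 / 2) k) * X ^ k

open Polynomial in
lemma coeff_targetPoly (n m : ℕ) :
    (targetPoly n).coeff m = if m ≤ n then ratChoose ((n : ℚ) + 1 / 2) m else 0 := by
  rw [targetPoly, Polynomial.finset_sum_coeff]
  simp only [Polynomial.coeff_C_mul, Polynomial.coeff_X_pow]
  rw [Finset.sum_congr rfl (fun k _ => by rw [mul_ite, mul_one, mul_zero]),
    Finset.sum_ite_eq (Finset.range (n + 1)) m (fun k => ratChoose ((n : ℚ) + 1 / 2) k)]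
  simp [Nat.lt_succ_iff]

open Polynomial in
lemma one_add_X_pow_mul_halfPoly (n : ℕ) :
    (X : Polynomial ℚ) ^ (n + 1) ∣ (1 + X) ^ n * halfPoly n - targetPoly n := by
  rw [Polynomial.X_pow_dvd_iff]
  intro d hd
  have hd' : d ≤ n := Nat.lt_succ_iff.mp hd
  rw [Polynomial.coeff_sub, Polynomial.coeff_mul, coeff_targetPoly, if_pos hd']
  rw [ratChoose_add]
  rw [sub_eq_zero]
  refine Finset.sum_congr rfl fun ij hij => ?_
  have h1 : ij.1 ≤ d := Finset.HasAntidiagonal.antidiagonal.fst_le hij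
  have h2 : ij.2 ≤ d := Finset.HasAntidiagonal.antidiagonal.snd_le hij
  rw [Polynomial.coeff_one_add_X_pow, coeff_halfPoly, if_pos (h2.trans hd'),
    ratChoose_natCast]

open Polynomial in
lemma halfPoly_pow_odd (n : ℕ) :
    (X : Polynomial ℚ) ^ (n + 1) ∣ halfPoly n ^ (2 * n + 1) - targetPoly n := by
  have h1 : halfPoly n ^ (2 * n + 1) = (halfPoly n ^ 2) ^ n * halfPoly n := by
    rw [pow_succ, pow_mul]
  have h2 : (X : Polynomial ℚ) ^ (n + 1) ∣ (halfPoly n ^ 2) ^ n - (1 + X) ^ n :=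
    dvd_trans (halfPoly_sq n) (sub_dvd_pow_sub_pow _ _ n)
  have h3 : (X : Polynomial ℚ) ^ (n + 1) ∣
      (halfPoly n ^ 2) ^ n * halfPoly n - (1 + X) ^ n * halfPoly n := by
    rw [← sub_mul]
    exact h2.mul_right _
  have := dvd_add h3 (one_add_X_pow_mul_halfPoly n)
  rw [h1]
  convert this using 1
  ring

/-- Let `R` be a commutative `ℚ`-algebra, `x ∈ R` a unit and `s ∈ R` with `s^(n+1) = 0`.
With `Δ = x · Σ_{k=0}^{n} (1/2 choose k) (s·x⁻²)^k`, one has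
`Δ^(2n+1) = Σ_{k=0}^{n} (n + 1/2 choose k) x^(2n+1−2k) s^k`; in particular `Δ^(2n+1)`
involves only nonnegative powers of `x`. -/
theorem binomial_sqrt_pow_odd_polynomial
    {R : Type*} [CommRing R] [Algebra ℚ R] (n : ℕ)
    (x : R) (hx : IsUnit x) (s : R) (hs : s ^ (n + 1) = 0) :
    (x * ∑ k ∈ Finset.range (n + 1),
        algebraMap ℚ R (ratChoose (1 / 2) k) * (s * ((hx.unit⁻¹ : Rˣ) : R) ^ 2) ^ k)
        ^ (2 * n + 1)
      = ∑ k ∈ Finset.range (n + 1),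
          algebraMap ℚ R (ratChoose ((n : ℚ) + 1 / 2) k) * x ^ (2 * n + 1 - 2 * k) * s ^ k := by
  set v : R := ((hx.unit⁻¹ : Rˣ) : R) with hv
  have hxv : x * v = 1 := hx.mul_val_inv
  set u : R := s * v ^ 2 with hudef
  have hu : u ^ (n + 1) = 0 := by
    rw [hudef, mul_pow, hs, zero_mul]
  -- apply aeval at u to the polynomial congruence
  obtain ⟨q, hq⟩ := halfPoly_pow_odd n
  have hq' : halfPoly n ^ (2 * n + 1) = targetPoly n + Polynomial.X ^ (n + 1) * q := by
    rw [← hq]; ring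
  have haeval : ∀ p : Polynomial ℚ, True := fun _ => trivial
  have hA : Polynomial.aeval u (halfPoly n)
      = ∑ k ∈ Finset.range (n + 1), algebraMap ℚ R (ratChoose (1 / 2) k) * u ^ k := by
    rw [halfPoly, map_sum]
    refine Finset.sum_congr rfl fun k _ => ?_
    simp [Polynomial.aeval_C]
  have hT : Polynomial.aeval u (targetPoly n)
      = ∑ k ∈ Finset.range (n + 1), algebraMap ℚ R (ratChoose ((n : ℚ) + 1 / 2) k) * u ^ k := by
    rw [targetPoly, map_sum]
    refine Finset.sum_congr rfl fun k _ => ?_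
    simp [Polynomial.aeval_C]
  have key : (∑ k ∈ Finset.range (n + 1), algebraMap ℚ R (ratChoose (1 / 2) k) * u ^ k)
        ^ (2 * n + 1)
      = ∑ k ∈ Finset.range (n + 1), algebraMap ℚ R (ratChoose ((n : ℚ) + 1 / 2) k) * u ^ k := by
    rw [← hA, ← hT, ← map_pow, hq', map_add, map_mul, map_pow, Polynomial.aeval_X, hu]
    ring
  rw [mul_pow, key, Finset.mul_sum]
  refine Finset.sum_congr rfl fun k hk => ?_
  have hkn : k ≤ n := Nat.lt_succ_iff.mp (Finset.mem_range.mp hk)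
  have h2k : 2 * k ≤ 2 * n + 1 := by omega
  have hxpow : x ^ (2 * n + 1) = x ^ (2 * n + 1 - 2 * k) * x ^ (2 * k) := by
    rw [← pow_add]; congr 1; omega
  rw [hudef, mul_pow, hxpow]
  have : x ^ (2 * k) * (v ^ 2) ^ k = 1 := by
    rw [pow_mul x 2 k, ← mul_pow, ← mul_pow, hxv, one_pow, one_pow]
  calc x ^ (2 * n + 1 - 2 * k) * x ^ (2 * k)
        * (algebraMap ℚ R (ratChoose ((n : ℚ) + 1 / 2) k) * (s ^ k * (v ^ 2) ^ k))
      = algebraMap ℚ R (ratChoose ((n : ℚ) + 1 / 2) k) * x ^ (2 * n + 1 - 2 * k) * s ^ k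
        * (x ^ (2 * k) * (v ^ 2) ^ k) := by ring
    _ = _ := by rw [this, mul_one]
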